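/- Let N be the representation of the poset 𝔻_{n,∞} with N(w) = k for every w ∈ B₁⁻ ∪ {(1,−1),(1,−1′)} and N(w) = 0 otherwise, all structure maps between nonzero values being the identity of k. Then N is pointwise finite-dimensional, but there is no epimorphism (no natural transformation that is surjective at every vertex) from any finite direct sum of representable projectives P_{v₁} ⊕ ⋯ ⊕ P_{v_r} onto N; in particular N is not finitely generated by representable projectives. -/

import Mathlib

/-!
STATEMENT 13: Let `N` be the representation of the poset `𝔻_{n,∞}` with `N(w) = k` for
every `w ∈ B₁⁻ ∪ {(1,-1),(1,-1')}` and `N(w) = 0` otherwise, all structure maps between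
nonzero values being the identity of `k`.  Then `N` is pointwise finite-dimensional,
but there is no epimorphism (no natural transformation surjective at every vertex) from
any finite direct sum of representable projectives `P_{v₁} ⊕ ⋯ ⊕ P_{v_r}` onto `N`; in
particular `N` is not finitely generated by representable projectives.

The poset `𝔻_{n+1,∞}` (covering all `n ≥ 1`): the linear order `C` (blocks
`B₁⁺ < B₂ < ⋯ < B_{n+1} < B₁⁻`, with `B₁⁻ = {(1,m) : m ≤ -2}`, here `{(0,m) : m ≤ -2}`)
together with two incomparable elements `t1, t2` greater than everything in `C`.
A value `k` resp. `0` is encoded as the one- resp. zero-dimensional space of functions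
`PLift _ → k`.
-/

open scoped Classical

namespace DInfty


/-- Marked-point data indexing the linear order `C`. -/
abbrev MP (n : ℕ) := Fin (n + 1) × ℤ

/-- Membership in `C`: everything except `(1,-1)` and `(1,0)` (here `(0,-1)`, `(0,0)`). -/
def InC (n : ℕ) (p : MP n) : Prop := p ≠ (0, -1) ∧ p ≠ (0, 0)

/-- Block index: `B₁⁺` is block `0`, `B_j` (`p.1 ≠ 0`) is block `p.1`, `B₁⁻` is block
`n+1`. -/
def blk (n : ℕ) (p : MP n) : ℕ :=
  if p.1 = 0 then (if 1 ≤ p.2 then 0 else n + 1) else p.1.val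

/-- The linear order of `C`. -/
def Cle (n : ℕ) (p q : MP n) : Prop :=
  blk n p < blk n q ∨ (blk n p = blk n q ∧ p.2 ≤ q.2)

/-- The vertices of the poset `𝔻_{n+1,∞}`: the elements of `C` and two extra elements
`t1 = (1,-1)` and `t2 = (1,-1')`. -/
inductive DVtx (n : ℕ) where
  | c : {p : MP n // InC n p} → DVtx n
  | t1 : DVtx n
  | t2 : DVtx n

/-- The order of `𝔻_{n+1,∞}`: `C` is ordered as above, `t1` and `t2` are incomparable
to each other and greater than every element of `C`. -/
def Dle (n : ℕ) : DVtx n → DVtx n → Prop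
  | .c p, .c q => Cle n p.1 q.1
  | .c _, .t1 => True
  | .c _, .t2 => True
  | .t1, .t1 => True
  | .t2, .t2 => True
  | _, _ => False

/-- A representation of the poset with vertex set `DVtx n` and order relation `r`, over
the field `k`: a functor to `k`-vector spaces. -/
structure DRep (n : ℕ) (k : Type) [Field k] (r : DVtx n → DVtx n → Prop) where
  V : DVtx n → Type
  [inst : ∀ v, AddCommGroup (V v)]
  [mod : ∀ v, Module k (V v)]
  map : ∀ {v w : DVtx n}, r v w → (V v →ₗ[k] V w)
  map_id : ∀ (v : DVtx n) (h : r v v), map h = LinearMap.id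
  map_comp : ∀ {u v w : DVtx n} (h₁ : r u v) (h₂ : r v w) (h₃ : r u w),
    map h₃ = (map h₂).comp (map h₁)

attribute [instance] DRep.inst DRep.mod

/-- Morphisms of representations: natural transformations. -/
structure DHom {n : ℕ} {k : Type} [Field k] {r : DVtx n → DVtx n → Prop}
    (M N : DRep n k r) where
  app : ∀ v, M.V v →ₗ[k] N.V v
  natural : ∀ {v w : DVtx n} (h : r v w),
    (app w).comp (M.map h) = (N.map h).comp (app v)

/-- Pointwise finite-dimensionality. -/
def Pwf {n : ℕ} {k : Type} [Field k] {r : DVtx n → DVtx n → Prop}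
    (M : DRep n k r) : Prop :=
  ∀ v, FiniteDimensional k (M.V v)

lemma Cle_trans {n : ℕ} {p q s : MP n} (h1 : Cle n p q) (h2 : Cle n q s) :
    Cle n p s := by
  unfold Cle at *
  omega

lemma Dle_trans {n : ℕ} {u v w : DVtx n} (h1 : Dle n u v) (h2 : Dle n v w) :
    Dle n u w := by
  cases u <;> cases v <;> cases w <;>
    first
      | exact False.elim h1
      | exact False.elim h2
      | trivial
      | exact Cle_trans h1 h2

/-- The representation associated with an up-closed set of vertices `S`: value `k` on
`S` (encoded as `PLift (S v) → k`), value `0` elsewhere, identities between the nonzero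
values. -/
noncomputable def upRep (n : ℕ) (k : Type) [Field k] (S : DVtx n → Prop)
    (hS : ∀ {u v : DVtx n}, Dle n u v → S u → S v) : DRep n k (Dle n) where
  V v := PLift (S v) → k
  map {v w} _h :=
    { toFun := fun f _hw => if hv : S v then f ⟨hv⟩ else 0
      map_add' := by
        intro f g
        funext hw
        by_cases hv : S v <;> simp [hv]
      map_smul' := by
        intro c f
        funext hw
        by_cases hv : S v <;> simp [hv] }
  map_id := by
    intro v h
    refine LinearMap.ext fun f => funext fun hv => ?_
    show (if hv' : S v then f ⟨hv'⟩ else 0) = f hv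
    rw [dif_pos hv.down]
  map_comp := by
    intro u v w h₁ h₂ h₃
    refine LinearMap.ext fun f => funext fun hw => ?_
    show (if hu : S u then f ⟨hu⟩ else 0)
        = (if hv : S v then (if hu : S u then f ⟨hu⟩ else 0) else 0)
    by_cases hu : S u
    · have hv : S v := hS h₁ hu
      rw [dif_pos hu, dif_pos hv]
    · rw [dif_neg hu]
      by_cases hv : S v
      · rw [dif_pos hv]
      · rw [dif_neg hv]

/-- The representable projective `P_v`. -/
noncomputable def Proj (n : ℕ) (k : Type) [Field k] (v : DVtx n) : DRep n k (Dle n) :=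
  upRep n k (fun w => Dle n v w) (fun h hv => Dle_trans hv h)

/-- The finite direct sum of a family of representations. -/
noncomputable def dsum {n : ℕ} {k : Type} [Field k] {r : ℕ}
    (M : Fin r → DRep n k (Dle n)) : DRep n k (Dle n) where
  V w := ∀ i, (M i).V w
  map h := LinearMap.pi fun i => ((M i).map h).comp (LinearMap.proj i)
  map_id := by
    intro v h
    refine LinearMap.ext fun f => funext fun i => ?_
    show ((M i).map h) (f i) = f i
    rw [(M i).map_id v h]
    rfl
  map_comp := by
    intro u v w h₁ h₂ h₃
    refine LinearMap.ext fun f => funext fun i => ?_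
    show ((M i).map h₃) (f i) = ((M i).map h₂) (((M i).map h₁) (f i))
    rw [(M i).map_comp h₁ h₂ h₃]
    rfl


/-- The up-closed subset `B₁⁻ ∪ {(1,-1),(1,-1')}` of `𝔻_{n+1,∞}`. -/
def inN (n : ℕ) : DVtx n → Prop
  | .c p => p.1.1 = 0 ∧ p.1.2 ≤ -2
  | .t1 => True
  | .t2 => True

lemma inN_up {n : ℕ} {u v : DVtx n} (h : Dle n u v) (hu : inN n u) : inN n v := by
  cases u with
  | t1 =>
    cases v with
    | t1 => trivial
    | t2 => exact False.elim h
    | c q => exact False.elim h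
  | t2 =>
    cases v with
    | t1 => exact False.elim h
    | t2 => trivial
    | c q => exact False.elim h
  | c p =>
    cases v with
    | t1 => trivial
    | t2 => trivial
    | c q =>
      obtain ⟨hp0, hp2⟩ := hu
      have h' : Cle n p.1 q.1 := h
      have hq := q.2
      unfold Cle blk at h'
      rw [if_pos hp0] at h'
      have hnot : ¬ (1 : ℤ) ≤ p.1.2 := by omega
      rw [if_neg hnot] at h'
      by_cases hq0 : q.1.1 = 0
      · rw [if_pos hq0] at h'
        refine ⟨hq0, ?_⟩
        by_cases h1q : (1 : ℤ) ≤ q.1.2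
        · rw [if_pos h1q] at h'
          omega
        · rw [if_neg h1q] at h'
          have hne1 : q.1.2 ≠ -1 := fun hc => hq.1 (Prod.ext hq0 hc)
          have hne2 : q.1.2 ≠ 0 := fun hc => hq.2 (Prod.ext hq0 hc)
          omega
      · exfalso
        rw [if_neg hq0] at h'
        have hlt := q.1.1.isLt
        omega

/-- The representation `N`: value `k` on `B₁⁻ ∪ {(1,-1),(1,-1')}`, value `0` elsewhere,
all structure maps between nonzero values the identity of `k`. -/
noncomputable def Nrep (n : ℕ) (k : Type) [Field k] : DRep n k (Dle n) :=
  upRep n k (inN n) (fun h hu => inN_up h hu)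

lemma Dle_refl {n : ℕ} (v : DVtx n) : Dle n v v := by
  cases v with
  | c p => exact Or.inr ⟨rfl, le_refl _⟩
  | t1 => trivial
  | t2 => trivial

/-- `N` is pointwise finite-dimensional, but no finite direct sum of
representable projectives admits a natural transformation onto `N` that is surjective
at every vertex; in particular `N` is not finitely generated by representable
projectives. -/
theorem Nrep_pwf_not_finitely_generated (n : ℕ) (k : Type) [Field k] :
    Pwf (Nrep n k) ∧
    ¬ ∃ (r : ℕ) (vs : Fin r → DVtx n)
        (φ : DHom (dsum fun i => Proj n k (vs i)) (Nrep n k)),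
        ∀ w, Function.Surjective (φ.app w) := by
  constructor
  · intro v
    haveI : Finite (PLift (inN n v)) := Finite.of_subsingleton
    show FiniteDimensional k (PLift (inN n v) → k)
    infer_instance
  · rintro ⟨r, vs, φ, hsurj⟩
    -- second coordinate of each generator
    have hfM : ∃ M : ℤ, M ≤ -3 ∧ ∀ (i : Fin r) (p : {p : MP n // InC n p}),
        vs i = .c p → M < p.1.2 := by
      classical
      let f : Fin r → ℤ := fun i => match vs i with
        | .c p => p.1.2
        | _ => 0
      refine ⟨(insert (-3 : ℤ) (Finset.image f Finset.univ)).min'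
          ⟨-3, Finset.mem_insert_self _ _⟩ - 1, ?_, ?_⟩
      · have := Finset.min'_le (insert (-3 : ℤ) (Finset.image f Finset.univ)) (-3)
          (Finset.mem_insert_self _ _)
        omega
      · intro i p hip
        have hle := Finset.min'_le (insert (-3 : ℤ) (Finset.image f Finset.univ)) (f i)
          (Finset.mem_insert_of_mem (Finset.mem_image_of_mem f (Finset.mem_univ i)))
        have hfi : f i = p.1.2 := by simp only [f, hip]
        omega
    obtain ⟨M, hM3, hMf⟩ := hfM
    have hInC : InC n ((0 : Fin (n + 1)), M) := by
      constructor
      · intro h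
        rw [Prod.ext_iff] at h
        omega
      · intro h
        rw [Prod.ext_iff] at h
        omega
    set w : DVtx n := .c ⟨((0 : Fin (n + 1)), M), hInC⟩ with hw
    have hNw : inN n w := ⟨rfl, show M ≤ -2 by omega⟩
    -- the image of φ at w is zero
    have key : ∀ x, φ.app w x = 0 := by
      intro x
      have hx : x = ∑ i, Pi.single i (x i) := (Finset.univ_sum_single x).symm
      rw [hx]
      refine (map_sum (φ.app w) _ _).trans ?_
      refine Finset.sum_eq_zero fun i _ => ?_
      by_cases h : Dle n (vs i) w
      · -- factor through the vertex `vs i`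
        set z : ∀ j, (Proj n k (vs j)).V (vs i) :=
          Pi.single i (fun _ => x i ⟨h⟩) with hz
        have hmap : (dsum fun j => Proj n k (vs j)).map h z = Pi.single i (x i) := by
          funext j
          change ((Proj n k (vs j)).map h) (z j) = _
          by_cases hij : j = i
          · subst hij
            funext a
            change (if hv : Dle n (vs j) (vs j) then z j ⟨hv⟩ else 0) = _
            rw [dif_pos (Dle_refl (vs j))]
            have hzj : z j = fun _ => x j ⟨h⟩ := by
              simp only [hz, Pi.single_eq_same]
              exact Pi.single_eq_same _ _
            rw [hzj, Pi.single_eq_same]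
          · have hzj : z j = 0 := by
              simp only [hz, Pi.single_eq_of_ne hij]
              exact Pi.single_eq_of_ne hij _
            rw [hzj, map_zero, Pi.single_eq_of_ne hij]
        have hnat := LinearMap.congr_fun (φ.natural h) z
        change φ.app w ((dsum fun j => Proj n k (vs j)).map h z)
          = (Nrep n k).map h (φ.app (vs i) z) at hnat
        rw [hmap] at hnat
        rw [hnat]
        have hzero : φ.app (vs i) z = 0 := by
          have hni : ¬ inN n (vs i) := by
            intro hin
            cases hvi : vs i with
            | t1 => rw [hvi] at h; exact h
            | t2 => rw [hvi] at h; exact h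
            | c p =>
              rw [hvi] at hin
              obtain ⟨hp0, hp2⟩ := hin
              have hlt := hMf i p hvi
              rw [hvi] at h
              have h' : Cle n p.1 ((0 : Fin (n + 1)), M) := h
              have hb : blk n ((0 : Fin (n + 1)), M) = n + 1 := by
                unfold blk
                rw [if_pos rfl, if_neg (show ¬ (1 : ℤ) ≤ M by omega)]
              have hbp : blk n p.1 = n + 1 := by
                unfold blk
                rw [if_pos hp0, if_neg (show ¬ (1 : ℤ) ≤ p.1.2 by omega)]
              unfold Cle at h'
              rw [hb, hbp] at h'
              omega
          have : ∀ (a b : (Nrep n k).V (vs i)), a = b := by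
            intro a b
            funext t
            exact absurd t.down hni
          exact this _ _
        rw [hzero, map_zero]
      · have hxi : x i = 0 := by
          funext a
          exact absurd a.down h
        rw [hxi, Pi.single_zero]
        exact map_zero (φ.app w)
    obtain ⟨x, hxeq⟩ := hsurj w (fun _ => 1)
    have h1 : (fun _ : PLift (inN n w) => (1 : k)) = 0 := hxeq ▸ key x
    have h2 := congrFun h1 ⟨hNw⟩
    exact one_ne_zero h2

end DInfty
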